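/- arXiv:1607.00268 — 4 statements merged into one kernel-verified Lean document; each statement's English description precedes it below -/
import Mathlib

section
/- Let f : ℝ → ℝ be locally Lipschitz on [0,T] satisfying f'(t) ≥ -α f(t)² - C f(t) for a.e. t, with α, C > 0 and f(0) = ω° ≥ 0. Then f(t) ≥ C e^{-Ct} ω° / (C + α(1 - e^{-Ct}) ω°) for all t ∈ [0,T]. -/
open MeasureTheory Set Filter

lemma key_mono {u u' : ℝ → ℝ} {a b : ℝ} (hab : a ≤ b) (K : NNReal)
    (hlip : LipschitzOnWith K u (Set.Icc a b))
    (hd : ∀ᵐ t ∂(volume : Measure ℝ), t ∈ Set.Ioo a b → HasDerivAt u (u' t) t)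
    (h0 : ∀ᵐ t ∂(volume : Measure ℝ), t ∈ Set.Ioo a b → 0 ≤ u' t) :
    u a ≤ u b := by
  set c : ℝ := (K : ℝ) with hc
  have hc0 : 0 ≤ c := K.coe_nonneg
  set cl : ℝ → ℝ := fun x => max a (min b x) with hcl
  have hclmem : ∀ x, cl x ∈ Set.Icc a b := fun x =>
    ⟨le_max_left _ _, max_le hab (min_le_left _ _)⟩
  have hclmono : Monotone cl := fun x y hxy =>
    max_le_max le_rfl (min_le_min le_rfl hxy)
  have habs : ∀ x y, |cl x - cl y| ≤ |x - y| := by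
    intro x y
    calc |cl x - cl y| ≤ max |a - a| |min b x - min b y| := abs_max_sub_max_le_max _ _ _ _
      _ = |min b x - min b y| := by simp
      _ ≤ max |b - b| |x - y| := abs_min_sub_min_le_max _ _ _ _
      _ = |x - y| := by simp
  have hub : ∀ x y, |u (cl x) - u (cl y)| ≤ c * |x - y| := by
    intro x y
    have h := hlip.dist_le_mul _ (hclmem x) _ (hclmem y)
    rw [Real.dist_eq, Real.dist_eq] at h
    exact h.trans (mul_le_mul_of_nonneg_left (habs x y) hc0)
  set v : ℝ → ℝ := fun x => u (cl x) + c * x with hv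
  have hmono : Monotone v := by
    intro x y hxy
    have h := (abs_le.1 (hub x y)).2
    rw [abs_of_nonpos (by linarith)] at h
    simp only [hv]
    linarith
  have hvcont : Continuous v := by
    have h2 : LipschitzWith (2 * K) v := by
      apply LipschitzWith.of_dist_le_mul
      intro x y
      rw [Real.dist_eq, Real.dist_eq]
      have h1 := hub x y
      have : |v x - v y| ≤ |u (cl x) - u (cl y)| + c * |x - y| := by
        simp only [hv]
        calc |u (cl x) + c * x - (u (cl y) + c * y)|
            ≤ |u (cl x) - u (cl y)| + |c * x - c * y| := by
              apply (abs_add_le _ _).trans_eq'; ring_nf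
          _ = |u (cl x) - u (cl y)| + c * |x - y| := by
              rw [← mul_sub, abs_mul, abs_of_nonneg hc0]
      refine this.trans ?_
      push_cast
      nlinarith [abs_nonneg (x - y)]
    exact h2.continuous
  -- identify v with its Stieltjes function
  have hst : ∀ x, hmono.stieltjesFunction x = v x := by
    intro x
    rw [hmono.stieltjesFunction_eq]
    exact rightLim_eq_of_tendsto (h := nhdsGT_neBot x)
      (hvcont.continuousAt.tendsto.mono_left nhdsWithin_le_nhds)
  set μ := hmono.stieltjesFunction.measure with hμ
  have hIoc : μ (Set.Ioc a b) = ENNReal.ofReal (v b - v a) := by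
    rw [hμ, StieltjesFunction.measure_Ioc, hst, hst]
  -- a.e. lower bound on the rn derivative
  have hael : ∀ᵐ x ∂(volume : Measure ℝ), x ∈ Set.Ioo a b →
      ENNReal.ofReal c ≤ Measure.rnDeriv μ volume x := by
    filter_upwards [hd, h0, hmono.ae_hasDerivAt] with x hx1 hx2 hx3
    intro hx
    have heq : v =ᶠ[nhds x] fun y => u y + c * y := by
      filter_upwards [Ioo_mem_nhds hx.1 hx.2] with y hy
      simp only [hv, hcl, min_eq_right hy.2.le, max_eq_right hy.1.le]
    have hdv : HasDerivAt v (u' x + c) x := by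
      have := (hx1 hx).add ((hasDerivAt_id x).const_mul c)
      refine HasDerivAt.congr_of_eventuallyEq ?_ heq
      convert this using 1
      · rfl
      ring
    have huniq : (Measure.rnDeriv μ volume x).toReal = u' x + c := hx3.unique hdv
    rcases eq_or_ne (Measure.rnDeriv μ volume x) ⊤ with h|h
    · simp [h]
    · rw [ENNReal.ofReal_le_iff_le_toReal h, huniq]
      linarith [hx2 hx]
  have hchain : ENNReal.ofReal c * ENNReal.ofReal (b - a) ≤ ENNReal.ofReal (v b - v a) := by
    calc ENNReal.ofReal c * ENNReal.ofReal (b - a)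
        = ∫⁻ _ in Set.Ioo a b, ENNReal.ofReal c ∂volume := by
          rw [setLIntegral_const, Real.volume_Ioo]
      _ ≤ ∫⁻ x in Set.Ioo a b, Measure.rnDeriv μ volume x ∂volume := by
          apply lintegral_mono_ae
          rw [ae_restrict_iff' measurableSet_Ioo]
          exact hael
      _ ≤ ∫⁻ x in Set.Ioc a b, Measure.rnDeriv μ volume x ∂volume :=
          lintegral_mono_set Set.Ioo_subset_Ioc_self
      _ = (volume.withDensity (Measure.rnDeriv μ volume)) (Set.Ioc a b) := by
          rw [withDensity_apply _ measurableSet_Ioc]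
      _ ≤ μ (Set.Ioc a b) := Measure.withDensity_rnDeriv_le μ volume _
      _ = ENNReal.ofReal (v b - v a) := hIoc
  rw [← ENNReal.ofReal_mul hc0] at hchain
  have hvab : c * (b - a) ≤ v b - v a := by
    have h0v : 0 ≤ v b - v a := sub_nonneg.2 (hmono hab)
    exact (ENNReal.ofReal_le_ofReal_iff h0v).1 hchain
  have hca : cl a = a := by simp [hcl, min_eq_right hab]
  have hcb : cl b = b := by simp [hcl, max_eq_right hab]
  simp only [hv, hca, hcb] at hvab
  nlinarith

theorem stmt_2 (T α C ω₀ : ℝ) (hT : 0 < T) (hα : 0 < α) (hC : 0 < C) (hω : 0 ≤ ω₀)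
    (f f' : ℝ → ℝ) (K : NNReal) (hlip : LipschitzOnWith K f (Set.Icc 0 T))
    (hf0 : f 0 = ω₀) (hnn : ∀ t ∈ Set.Icc (0:ℝ) T, 0 ≤ f t)
    (hderiv : ∀ᵐ t ∂(volume : Measure ℝ), t ∈ Set.Ioo (0:ℝ) T → HasDerivAt f (f' t) t)
    (hineq : ∀ᵐ t ∂(volume : Measure ℝ), t ∈ Set.Ioo (0:ℝ) T →
      -α * (f t) ^ 2 - C * f t ≤ f' t) :
    ∀ t ∈ Set.Icc (0:ℝ) T,
      C * Real.exp (-(C * t)) * ω₀ / (C + α * (1 - Real.exp (-(C * t))) * ω₀) ≤ f t := by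
  set ψ : ℝ → ℝ := fun t =>
    C * Real.exp (-(C * t)) * ω₀ / (C + α * (1 - Real.exp (-(C * t))) * ω₀) with hψdef
  have hexple : ∀ t : ℝ, 0 ≤ t → Real.exp (-(C * t)) ≤ 1 := by
    intro t ht
    rw [Real.exp_le_one_iff]
    nlinarith
  have hexppos : ∀ t : ℝ, 0 < Real.exp (-(C * t)) := fun t => Real.exp_pos _
  have hD : ∀ t : ℝ, 0 ≤ t → 0 < C + α * (1 - Real.exp (-(C * t))) * ω₀ := by
    intro t ht
    have h1 : 0 ≤ α * (1 - Real.exp (-(C * t))) * ω₀ :=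
      mul_nonneg (mul_nonneg hα.le (sub_nonneg.2 (hexple t ht))) hω
    linarith
  have hψnn : ∀ t : ℝ, 0 ≤ t → 0 ≤ ψ t := by
    intro t ht
    apply div_nonneg _ (hD t ht).le
    positivity
  have hψle : ∀ t : ℝ, 0 ≤ t → ψ t ≤ ω₀ := by
    intro t ht
    rw [hψdef, div_le_iff₀ (hD t ht)]
    nlinarith [mul_nonneg (mul_nonneg hC.le hω) (sub_nonneg.2 (hexple t ht)),
      mul_nonneg (mul_nonneg hα.le (mul_nonneg hω hω)) (sub_nonneg.2 (hexple t ht))]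
  have hψ0 : ψ 0 = ω₀ := by
    have h1 : ψ 0 = C * ω₀ / C := by simp only [hψdef]; norm_num
    rw [h1, mul_comm, mul_div_assoc, div_self hC.ne', mul_one]
  have hψd : ∀ t : ℝ, 0 ≤ t → HasDerivAt ψ (-α * ψ t ^ 2 - C * ψ t) t := by
    intro t ht
    have hE : HasDerivAt (fun t : ℝ => Real.exp (-(C * t))) (Real.exp (-(C * t)) * (-C)) t := by
      have h1 : HasDerivAt (fun t : ℝ => -(C * t)) (-C) t := by
        simpa [Pi.neg_def] using ((hasDerivAt_id t).const_mul C).neg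
      exact h1.exp
    have hN : HasDerivAt (fun t : ℝ => C * Real.exp (-(C * t)) * ω₀)
        (C * (Real.exp (-(C * t)) * (-C)) * ω₀) t := (hE.const_mul C).mul_const ω₀
    have hDd : HasDerivAt (fun t : ℝ => C + α * (1 - Real.exp (-(C * t))) * ω₀)
        (α * (-(Real.exp (-(C * t)) * (-C))) * ω₀) t := by
      have h2 : HasDerivAt (fun t : ℝ => 1 - Real.exp (-(C * t)))
          (-(Real.exp (-(C * t)) * (-C))) t := (hE.const_sub 1)
      exact ((h2.const_mul α).mul_const ω₀).const_add C
    have hq := hN.div hDd (hD t ht).ne'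
    convert hq using 1
    iterate 3 rfl
    simp only [hψdef]
    field_simp [(hD t ht).ne']
    ring
  have hψc : ∀ t : ℝ, 0 ≤ t → ContinuousAt ψ t := fun t ht => (hψd t ht).continuousAt
  -- Lipschitz bound for ψ on [0, T]
  set M : NNReal := Real.toNNReal (α * ω₀ ^ 2 + C * ω₀) with hM
  have hψlip : LipschitzOnWith M ψ (Set.Icc 0 T) := by
    apply (convex_Icc (0:ℝ) T).lipschitzOnWith_of_nnnorm_hasDerivWithin_le
      (f' := fun t => -α * ψ t ^ 2 - C * ψ t)
      (fun x hx => (hψd x hx.1).hasDerivWithinAt)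
    intro x hx
    rw [← NNReal.coe_le_coe, coe_nnnorm, Real.norm_eq_abs, hM,
      Real.coe_toNNReal _ (by nlinarith)]
    have h1 := hψnn x hx.1
    have h2 := hψle x hx.1
    rw [abs_le]
    constructor <;> nlinarith [mul_le_mul h2 h2 h1 hω, mul_nonneg h1 h1]
  -- main comparison
  intro t₀ ht₀
  by_contra hcon
  push_neg at hcon
  replace hcon : f t₀ < ψ t₀ := hcon
  set S : Set ℝ := {t | t ∈ Set.Icc 0 t₀ ∧ 0 ≤ f t - ψ t} with hS
  have hS0 : (0:ℝ) ∈ S := ⟨⟨le_rfl, ht₀.1⟩, by rw [hf0, hψ0]; simp⟩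
  have hSclosed : IsClosed S := by
    have hfc : ContinuousOn (fun t => f t - ψ t) (Set.Icc 0 t₀) := by
      apply ContinuousOn.sub
      · exact (hlip.continuousOn).mono (Set.Icc_subset_Icc le_rfl ht₀.2)
      · exact fun t ht => (hψc t ht.1).continuousWithinAt
    have : S = Set.Icc 0 t₀ ∩ (fun t => f t - ψ t) ⁻¹' Set.Ici 0 := by
      ext t; simp [hS, Set.mem_Ici, and_comm]
    rw [this]
    exact hfc.preimage_isClosed_of_isClosed isClosed_Icc isClosed_Ici
  have hbdd : BddAbove S := ⟨t₀, fun x hx => hx.1.2⟩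
  set s := sSup S with hs
  have hsmem : s ∈ S := hSclosed.csSup_mem ⟨0, hS0⟩ hbdd
  have hs0 : 0 ≤ s := hsmem.1.1
  have hst₀ : s ≤ t₀ := hsmem.1.2
  have hslt : s < t₀ := by
    rcases lt_or_eq_of_le hst₀ with h | h
    · exact h
    · exfalso; rw [h] at hsmem; linarith [hsmem.2]
  have hneg : ∀ t ∈ Set.Ioc s t₀, f t - ψ t < 0 := by
    intro t ht
    by_contra h
    push_neg at h
    have : t ∈ S := ⟨⟨hs0.trans ht.1.le, ht.2⟩, h⟩
    exact absurd (le_csSup hbdd this) (not_le.2 ht.1)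
  -- apply key lemma to u = f - ψ on [s, t₀]
  have hsub : Set.Icc s t₀ ⊆ Set.Icc 0 T := Set.Icc_subset_Icc hs0 ht₀.2
  have hsubo : Set.Ioo s t₀ ⊆ Set.Ioo 0 T := Set.Ioo_subset_Ioo hs0 ht₀.2
  have hulip : LipschitzOnWith (K + M) (fun t => f t - ψ t) (Set.Icc s t₀) := by
    apply LipschitzOnWith.of_dist_le_mul
    intro x hx y hy
    have h1 := (hlip.mono hsub).dist_le_mul x hx y hy
    have h2 := (hψlip.mono hsub).dist_le_mul x hx y hy
    simp only [Real.dist_eq] at h1 h2 ⊢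
    rw [NNReal.coe_add]
    have e : f x - ψ x - (f y - ψ y) = (f x - f y) + -(ψ x - ψ y) := by ring
    rw [e]
    calc |(f x - f y) + -(ψ x - ψ y)| ≤ |f x - f y| + |ψ x - ψ y| :=
          (abs_add_le _ _).trans (by rw [abs_neg])
      _ ≤ (K : ℝ) * |x - y| + (M : ℝ) * |x - y| := add_le_add h1 h2
      _ = ((K : ℝ) + (M : ℝ)) * |x - y| := by ring
  have hkey := key_mono hslt.le (K + M) hulip (u' := fun t => f' t - (-α * ψ t ^ 2 - C * ψ t))
    (by
      filter_upwards [hderiv] with t ht hmem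
      exact (ht (hsubo hmem)).sub (hψd t (hs0.trans hmem.1.le)))
    (by
      filter_upwards [hineq] with t ht hmem
      have h1 := ht (hsubo hmem)
      have h2 := hneg t ⟨hmem.1, hmem.2.le⟩
      have h3 := hnn t ⟨(hs0.trans hmem.1.le), hmem.2.le.trans ht₀.2⟩
      have h4 := hψnn t (hs0.trans hmem.1.le)
      have h5 : -(α * (f t + ψ t) + C) * (f t - ψ t) ≤ f' t - (-α * ψ t ^ 2 - C * ψ t) := by
        nlinarith
      have h6 : 0 ≤ (α * (f t + ψ t) + C) * (ψ t - f t) :=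
        mul_nonneg (by nlinarith) (by linarith)
      nlinarith
      )
  have := hsmem.2
  linarith
end

section
/- Let a = e^h with h ∈ W^{1,∞}(ℝ²), and let v ∈ C¹(ℝ²)² satisfy div(a v) = 0. Then ω v = -½|v|² ∇^⊥ h - a^{-1} (div(a S_v))^⊥, where ω = curl v, S_v = v⊗v - ½|v|² Id, and w^⊥ = (-w₂, w₁). -/
open MeasureTheory

/-- Inhomogeneous Delort-type identity: for `a = e^h` and a `C¹` field `v` with
`div(a v) = 0`, one has `ω v = -½|v|² ∇^⊥h - a⁻¹ (div(a S_v))^⊥` pointwise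
(written componentwise, with `w^⊥ = (-w₂, w₁)`). -/
theorem stmt_6 (h : EuclideanSpace ℝ (Fin 2) → ℝ) (K : NNReal) (Mh : ℝ)
    (hdiff : Differentiable ℝ h) (hlip : LipschitzWith K h) (hbdd : ∀ x, |h x| ≤ Mh)
    (v : EuclideanSpace ℝ (Fin 2) → EuclideanSpace ℝ (Fin 2)) (hv : ContDiff ℝ 1 v)
    (hdivav : ∀ x : EuclideanSpace ℝ (Fin 2),
      fderiv ℝ (fun y => Real.exp (h y) * v y 0) x (EuclideanSpace.single 0 1)
        + fderiv ℝ (fun y => Real.exp (h y) * v y 1) x (EuclideanSpace.single 1 1) = 0) :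
    ∀ x : EuclideanSpace ℝ (Fin 2),
      let a : EuclideanSpace ℝ (Fin 2) → ℝ := fun y => Real.exp (h y)
      let ω : ℝ := fderiv ℝ (fun y => v y 1) x (EuclideanSpace.single 0 1)
        - fderiv ℝ (fun y => v y 0) x (EuclideanSpace.single 1 1)
      let S : Fin 2 → Fin 2 → EuclideanSpace ℝ (Fin 2) → ℝ := fun i j y =>
        v y i * v y j - (if i = j then (1:ℝ)/2 * (v y 0 ^ 2 + v y 1 ^ 2) else 0)
      let divaS : Fin 2 → ℝ := fun j =>
        fderiv ℝ (fun y => a y * S 0 j y) x (EuclideanSpace.single 0 1)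
          + fderiv ℝ (fun y => a y * S 1 j y) x (EuclideanSpace.single 1 1)
      (ω * v x 0 =
          -(1/2) * (v x 0 ^ 2 + v x 1 ^ 2) * (-(fderiv ℝ h x (EuclideanSpace.single 1 1)))
            - (a x)⁻¹ * (-(divaS 1))) ∧
      (ω * v x 1 =
          -(1/2) * (v x 0 ^ 2 + v x 1 ^ 2) * (fderiv ℝ h x (EuclideanSpace.single 0 1))
            - (a x)⁻¹ * (divaS 0)) := by
  intro x a ω S divaS
  have hv' : Differentiable ℝ v := hv.differentiable one_ne_zero
  have hv0 : Differentiable ℝ (fun y => v y 0) := by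
    have : Differentiable ℝ ((EuclideanSpace.proj (0:Fin 2)) ∘ v) :=
      (EuclideanSpace.proj (0:Fin 2)).differentiable.comp hv'
    exact this
  have hv1 : Differentiable ℝ (fun y => v y 1) := by
    have : Differentiable ℝ ((EuclideanSpace.proj (1:Fin 2)) ∘ v) :=
      (EuclideanSpace.proj (1:Fin 2)).differentiable.comp hv'
    exact this
  have hae : Differentiable ℝ (fun y => Real.exp (h y)) := hdiff.exp
  -- product rule applied to a vector
  have key : ∀ (f g : EuclideanSpace ℝ (Fin 2) → ℝ), Differentiable ℝ f → Differentiable ℝ g →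
      ∀ w, fderiv ℝ (fun y => f y * g y) x w
        = f x * fderiv ℝ g x w + g x * fderiv ℝ f x w := by
    intro f g hf hg w
    rw [fderiv_fun_mul (hf x) (hg x)]
    simp [smul_eq_mul]
  have kexp : ∀ w, fderiv ℝ (fun y => Real.exp (h y)) x w
      = Real.exp (h x) * fderiv ℝ h x w := by
    intro w
    rw [fderiv_exp (hdiff x)]
    simp [smul_eq_mul]
  set w0 : EuclideanSpace ℝ (Fin 2) := EuclideanSpace.single 0 1 with hw0
  set w1 : EuclideanSpace ℝ (Fin 2) := EuclideanSpace.single 1 1 with hw1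
  set A : ℝ := Real.exp (h x) with hA
  set V0 : ℝ := v x 0 with hV0
  set V1 : ℝ := v x 1 with hV1
  set p0 : ℝ := fderiv ℝ (fun y => v y 0) x w0 with hp0
  set p1 : ℝ := fderiv ℝ (fun y => v y 0) x w1 with hp1
  set q0 : ℝ := fderiv ℝ (fun y => v y 1) x w0 with hq0
  set q1 : ℝ := fderiv ℝ (fun y => v y 1) x w1 with hq1
  set H0 : ℝ := fderiv ℝ h x w0 with hH0
  set H1 : ℝ := fderiv ℝ h x w1 with hH1
  have hApos : A ≠ 0 := (Real.exp_pos _).ne'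
  -- constraint
  have hc := hdivav x
  rw [key _ _ hae hv0 w0, key _ _ hae hv1 w1, kexp, kexp] at hc
  -- rewrite the four matrix entries of a*S
  have e01 : (fun y => a y * S 0 1 y) = fun y => Real.exp (h y) * ((fun y => v y 0) y * (fun y => v y 1) y) := by
    funext y; simp [a, S]
  have e10 : (fun y => a y * S 1 0 y) = fun y => Real.exp (h y) * ((fun y => v y 1) y * (fun y => v y 0) y) := by
    funext y; simp [a, S]
  have e00 : (fun y => a y * S 0 0 y) = fun y => Real.exp (h y) *
      ((1/2 : ℝ) * ((fun y => v y 0) y * (fun y => v y 0) y) - (1/2 : ℝ) * ((fun y => v y 1) y * (fun y => v y 1) y)) := by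
    funext y; simp [a, S]; ring
  have e11 : (fun y => a y * S 1 1 y) = fun y => Real.exp (h y) *
      ((1/2 : ℝ) * ((fun y => v y 1) y * (fun y => v y 1) y) - (1/2 : ℝ) * ((fun y => v y 0) y * (fun y => v y 0) y)) := by
    funext y; simp [a, S]; ring
  -- differentiability of inner parts
  have d01 : Differentiable ℝ (fun y => (fun y => v y 0) y * (fun y => v y 1) y) := hv0.mul hv1
  have d10 : Differentiable ℝ (fun y => (fun y => v y 1) y * (fun y => v y 0) y) := hv1.mul hv0
  have d00 : Differentiable ℝ (fun y => (1/2 : ℝ) * ((fun y => v y 0) y * (fun y => v y 0) y) - (1/2 : ℝ) * ((fun y => v y 1) y * (fun y => v y 1) y)) :=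
    ((hv0.mul hv0).const_mul _).sub ((hv1.mul hv1).const_mul _)
  have d11 : Differentiable ℝ (fun y => (1/2 : ℝ) * ((fun y => v y 1) y * (fun y => v y 1) y) - (1/2 : ℝ) * ((fun y => v y 0) y * (fun y => v y 0) y)) :=
    ((hv1.mul hv1).const_mul _).sub ((hv0.mul hv0).const_mul _)
  -- inner derivatives
  have D00 : ∀ w, fderiv ℝ (fun y => (1/2 : ℝ) * ((fun y => v y 0) y * (fun y => v y 0) y) - (1/2 : ℝ) * ((fun y => v y 1) y * (fun y => v y 1) y)) x w
      = (1/2:ℝ) * fderiv ℝ (fun y => (fun y => v y 0) y * (fun y => v y 0) y) x w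
        - (1/2:ℝ) * fderiv ℝ (fun y => (fun y => v y 1) y * (fun y => v y 1) y) x w := by
    intro w
    rw [fderiv_fun_sub (((hv0.fun_mul hv0).const_mul _) x) (((hv1.fun_mul hv1).const_mul _) x),
        fderiv_const_mul ((hv0.fun_mul hv0) x), fderiv_const_mul ((hv1.fun_mul hv1) x)]
    simp [smul_eq_mul]
  have D11 : ∀ w, fderiv ℝ (fun y => (1/2 : ℝ) * ((fun y => v y 1) y * (fun y => v y 1) y) - (1/2 : ℝ) * ((fun y => v y 0) y * (fun y => v y 0) y)) x w
      = (1/2:ℝ) * fderiv ℝ (fun y => (fun y => v y 1) y * (fun y => v y 1) y) x w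
        - (1/2:ℝ) * fderiv ℝ (fun y => (fun y => v y 0) y * (fun y => v y 0) y) x w := by
    intro w
    rw [fderiv_fun_sub (((hv1.fun_mul hv1).const_mul _) x) (((hv0.fun_mul hv0).const_mul _) x),
        fderiv_const_mul ((hv1.fun_mul hv1) x), fderiv_const_mul ((hv0.fun_mul hv0) x)]
    simp [smul_eq_mul]
  have hd1 : divaS 1 = A * (V0 * ω - (1/2) * (V0^2 + V1^2) * H1) := by
    simp only [divaS, e01, e11, ω]
    rw [key _ _ hae d01 w0, key _ _ hae d11 w1, kexp, kexp, D11,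
        key _ _ hv0 hv1 w0, key _ _ hv1 hv1 w1, key _ _ hv0 hv0 w1]
    linear_combination V1 * hc
  have hd0 : divaS 0 = A * (-(V1 * ω) - (1/2) * (V0^2 + V1^2) * H0) := by
    simp only [divaS, e00, e10, ω]
    rw [key _ _ hae d00 w0, key _ _ hae d10 w1, kexp, kexp, D00,
        key _ _ hv0 hv0 w0, key _ _ hv1 hv1 w0, key _ _ hv1 hv0 w1]
    linear_combination V0 * hc
  constructor
  · rw [hd1, show a x = A from rfl]
    field_simp
    ring
  · rw [hd0, show a x = A from rfl]
    field_simp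
    ring
end

section
/- The function x ↦ x(1 + log_-(√x))² is concave on [0, x₀] for some x₀ > 0, and consequently, for any probability measure μ on ℝ² and any measurable F : ℝ² → ℝ² with small L²(μ) norm, one has ∫ (1 + log_-(|F|))² |F|² dμ ≤ (1 + log_-( ∫|F|² dμ ))² ∫|F|² dμ, where log_-(x) = max(0, -log x). -/
open MeasureTheory

noncomputable def Phi (x : ℝ) : ℝ := x * (1 + max 0 (-Real.log (Real.sqrt x))) ^ 2

lemma Phi_of_pos_le_one {y : ℝ} (h0 : 0 < y) (h1 : y ≤ 1) :
    Phi y = y * (1 - Real.log y / 2) ^ 2 := by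
  have hs : Real.log (Real.sqrt y) = Real.log y / 2 := Real.log_sqrt h0.le
  have hl : Real.log y ≤ 0 := Real.log_nonpos h0.le h1
  rw [Phi, hs, max_eq_right (by linarith)]
  ring

lemma Phi_of_one_le {y : ℝ} (h1 : 1 ≤ y) : Phi y = y := by
  have hs : Real.log (Real.sqrt y) = Real.log y / 2 := Real.log_sqrt (by linarith)
  have hl : 0 ≤ Real.log y := Real.log_nonneg h1
  rw [Phi, hs, max_eq_left (by linarith)]; ring

lemma exp_neg_four_le_one : Real.exp (-4) ≤ 1 :=
  Real.exp_le_one_iff.mpr (by norm_num)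

lemma tangent {m y : ℝ} (hm0 : 0 < m) (hm1 : m ≤ Real.exp (-4)) (hy : 0 ≤ y) :
    Phi y ≤ Phi m +
      ((1 - Real.log m / 2) ^ 2 - (1 - Real.log m / 2)) * (y - m) := by
  set a := 1 - Real.log m / 2 with ha_def
  have hlm : Real.log m ≤ -4 := by
    calc Real.log m ≤ Real.log (Real.exp (-4)) := Real.log_le_log hm0 hm1
    _ = -4 := Real.log_exp _
  have ha : 3 ≤ a := by rw [ha_def]; linarith
  have hPm : Phi m = m * a ^ 2 := by
    rw [Phi_of_pos_le_one hm0 (hm1.trans exp_neg_four_le_one)]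
  rcases hy.eq_or_lt with h0 | h0
  · rw [← h0]
    have : Phi 0 = 0 := by simp [Phi]
    rw [this]
    nlinarith [hm0.le]
  rcases le_or_gt y 1 with h1 | h1
  · -- main case
    have hb : 1 ≤ 1 - Real.log y / 2 := by
      have := Real.log_nonpos h0.le h1
      linarith
    set t := (1 - Real.log y / 2) - a with ht_def
    have hy_eq : y = m * Real.exp (-(2 * t)) := by
      have e1 : y = Real.exp (Real.log y) := (Real.exp_log h0).symm
      have e2 : m = Real.exp (Real.log m) := (Real.exp_log hm0).symm
      rw [e1, e2, ← Real.exp_add]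
      congr 1
      rw [ht_def, ha_def]
      ring
    have key : a + 2 * a * t + t ^ 2 ≤ a * Real.exp (2 * t) := by
      rcases le_or_gt (-1) t with h | h
      · have h1' : (0:ℝ) ≤ 1 + t := by linarith
        have h2' : 1 + t ≤ Real.exp t := by
          have := Real.add_one_le_exp t; linarith
        have h3' : (1 + t) ^ 2 ≤ Real.exp t ^ 2 :=
          pow_le_pow_left₀ h1' h2' 2
        have h4' : Real.exp t ^ 2 = Real.exp (2 * t) := by
          rw [show (2:ℝ) * t = t + t by ring, Real.exp_add]; ring
        nlinarith [sq_nonneg t]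
      · have ht1 : 1 - a ≤ t := by rw [ht_def]; linarith
        have hpos : 0 ≤ a * Real.exp (2 * t) := by positivity
        have hprod : (t + 1) * (t + (a - 1)) ≤ 0 :=
          mul_nonpos_of_nonpos_of_nonneg (by linarith) (by linarith)
        nlinarith [hprod]
    have h5 : m * Real.exp (-(2 * t)) * (a + 2 * a * t + t ^ 2) ≤ m * a := by
      have e1 : Real.exp (-(2 * t)) * Real.exp (2 * t) = 1 := by
        rw [← Real.exp_add]; simp
      have step : m * Real.exp (-(2 * t)) * (a + 2 * a * t + t ^ 2) ≤
          m * Real.exp (-(2 * t)) * (a * Real.exp (2 * t)) := by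
        apply mul_le_mul_of_nonneg_left key (by positivity)
      have e2 : m * Real.exp (-(2 * t)) * (a * Real.exp (2 * t)) = m * a := by
        calc m * Real.exp (-(2 * t)) * (a * Real.exp (2 * t))
            = m * a * (Real.exp (-(2 * t)) * Real.exp (2 * t)) := by ring
          _ = m * a := by rw [e1]; ring
      linarith
    rw [Phi_of_pos_le_one h0 h1, hPm]
    have hb_eq : 1 - Real.log y / 2 = a + t := by rw [ht_def]; ring
    rw [hb_eq, hy_eq]
    nlinarith [h5]
  · rw [Phi_of_one_le h1.le, hPm]
    have ha2 : 5 ≤ a ^ 2 - a - 1 := by nlinarith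
    nlinarith [hm0.le, mul_nonneg hm0.le (by linarith : (0:ℝ) ≤ a)]

lemma phi_concave : ConcaveOn ℝ (Set.Icc 0 (Real.exp (-4))) Phi := by
  constructor
  · exact convex_Icc _ _
  · intro x hx y hy u v hu hv huv
    simp only [smul_eq_mul]
    rcases hu.eq_or_lt with hu0 | hu0
    · rw [← hu0]; simp only [zero_mul, zero_add]
      have : v = 1 := by linarith
      rw [this]; simp
    rcases hv.eq_or_lt with hv0 | hv0
    · rw [← hv0]; simp only [zero_mul, add_zero]
      have : u = 1 := by linarith
      rw [this]; simp
    set z := u * x + v * y with hz_def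
    have hx0 : 0 ≤ x := hx.1
    have hy0 : 0 ≤ y := hy.1
    have hz0 : 0 ≤ z := by positivity
    rcases hz0.eq_or_lt with hz | hz
    · -- z = 0 forces x = y = 0
      have hux : 0 ≤ u * x := mul_nonneg hu hx0
      have hvy : 0 ≤ v * y := mul_nonneg hv hy0
      have hux0 : u * x = 0 := by rw [hz_def] at hz; linarith
      have hvy0 : v * y = 0 := by rw [hz_def] at hz; linarith
      have hx' : x = 0 := by
        rcases mul_eq_zero.mp hux0 with h | h
        · linarith
        · exact h
      have hy' : y = 0 := by
        rcases mul_eq_zero.mp hvy0 with h | h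
        · linarith
        · exact h
      rw [hx', hy', ← hz]
      simp [Phi]
    · have hz1 : z ≤ Real.exp (-4) := by
        have h1 : u * x ≤ u * Real.exp (-4) := by
          apply mul_le_mul_of_nonneg_left hx.2 hu
        have h2 : v * y ≤ v * Real.exp (-4) := by
          apply mul_le_mul_of_nonneg_left hy.2 hv
        calc z = u * x + v * y := rfl
          _ ≤ u * Real.exp (-4) + v * Real.exp (-4) := by linarith
          _ = Real.exp (-4) := by rw [← add_mul, huv, one_mul]
      set s := (1 - Real.log z / 2) ^ 2 - (1 - Real.log z / 2) with hs_def
      have htx := tangent hz hz1 hx0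
      have hty := tangent hz hz1 hy0
      rw [← hs_def] at htx hty
      have h1 := mul_le_mul_of_nonneg_left htx hu
      have h2 := mul_le_mul_of_nonneg_left hty hv
      have e0 : u * (Phi z + s * (x - z)) + v * (Phi z + s * (y - z)) = Phi z := by
        linear_combination (Phi z - s * z) * huv - s * hz_def
      linarith

theorem stmt_10 :
    (∃ x₀ : ℝ, 0 < x₀ ∧ ConcaveOn ℝ (Set.Icc 0 x₀)
      (fun x : ℝ => x * (1 + max 0 (-Real.log (Real.sqrt x))) ^ 2)) ∧
    ∃ ε : ℝ, 0 < ε ∧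
      ∀ (μ : Measure (EuclideanSpace ℝ (Fin 2))), IsProbabilityMeasure μ →
      ∀ F : EuclideanSpace ℝ (Fin 2) → EuclideanSpace ℝ (Fin 2), Measurable F →
        Integrable (fun x => ‖F x‖ ^ 2) μ →
        Integrable (fun x => (1 + max 0 (-Real.log ‖F x‖)) ^ 2 * ‖F x‖ ^ 2) μ →
        (∫ x, ‖F x‖ ^ 2 ∂μ) ≤ ε →
        ∫ x, (1 + max 0 (-Real.log ‖F x‖)) ^ 2 * ‖F x‖ ^ 2 ∂μ ≤
          (1 + max 0 (-Real.log (∫ x, ‖F x‖ ^ 2 ∂μ))) ^ 2 * ∫ x, ‖F x‖ ^ 2 ∂μ := by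
  constructor
  · exact ⟨Real.exp (-4), Real.exp_pos _, phi_concave⟩
  · refine ⟨Real.exp (-4), Real.exp_pos _, ?_⟩
    intro μ hμ F hF h1 h2 hε
    set m := ∫ x, ‖F x‖ ^ 2 ∂μ with hm_def
    have hm0 : 0 ≤ m := integral_nonneg fun x => by positivity
    rcases hm0.eq_or_lt with hm | hm
    · -- m = 0 : F = 0 a.e.
      have hg : (fun x => ‖F x‖ ^ 2) =ᵐ[μ] 0 :=
        (integral_eq_zero_iff_of_nonneg (fun x => by positivity) h1).mp hm.symm
      have hzero : (fun x => (1 + max 0 (-Real.log ‖F x‖)) ^ 2 * ‖F x‖ ^ 2) =ᵐ[μ] 0 := by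
        filter_upwards [hg] with x hx
        simp only [Pi.zero_apply] at hx ⊢
        rw [hx, mul_zero]
      rw [integral_congr_ae hzero]
      simp only [← hm]
      simp
    · -- m > 0
      have hm1 : m ≤ Real.exp (-4) := hε
      set s := (1 - Real.log m / 2) ^ 2 - (1 - Real.log m / 2) with hs_def
      have key : ∀ x, (1 + max 0 (-Real.log ‖F x‖)) ^ 2 * ‖F x‖ ^ 2 ≤
          (Phi m - s * m) + s * ‖F x‖ ^ 2 := by
        intro x
        have hyx : (0:ℝ) ≤ ‖F x‖ ^ 2 := by positivity
        have ht := tangent hm hm1 hyx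
        have hPhix : Phi (‖F x‖ ^ 2) =
            (1 + max 0 (-Real.log ‖F x‖)) ^ 2 * ‖F x‖ ^ 2 := by
          rw [Phi, Real.sqrt_sq (norm_nonneg _)]; ring
        rw [← hPhix]
        rw [← hs_def] at ht
        linarith
      have hInt2 : Integrable (fun x => (Phi m - s * m) + s * ‖F x‖ ^ 2) μ :=
        (integrable_const _).add (h1.const_mul s)
      have step1 : ∫ x, (1 + max 0 (-Real.log ‖F x‖)) ^ 2 * ‖F x‖ ^ 2 ∂μ ≤
          ∫ x, ((Phi m - s * m) + s * ‖F x‖ ^ 2) ∂μ :=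
        integral_mono h2 hInt2 key
      have step2 : ∫ x, ((Phi m - s * m) + s * ‖F x‖ ^ 2) ∂μ = Phi m := by
        rw [integral_add (integrable_const _) (h1.const_mul s),
          integral_const, integral_const_mul, ← hm_def]
        simp [measure_univ]
      have hlm : Real.log m ≤ -4 := by
        calc Real.log m ≤ Real.log (Real.exp (-4)) := Real.log_le_log hm hm1
        _ = -4 := Real.log_exp _
      have step3 : Phi m ≤ (1 + max 0 (-Real.log m)) ^ 2 * m := by
        rw [Phi_of_pos_le_one hm (hm1.trans exp_neg_four_le_one),
          max_eq_right (by linarith : (0:ℝ) ≤ -Real.log m)]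
        nlinarith [mul_nonneg hm.le
          (by nlinarith : (0:ℝ) ≤ (1 + -Real.log m) ^ 2 - (1 - Real.log m / 2) ^ 2)]
      linarith
end

section
/- Let W : ℝ² → ℝ² be log-Lipschitz, i.e. |W(x)-W(y)| ≤ C|x-y|(1 + log_-(|x-y|)) for all x,y, and let ψ^s denote its flow, ∂_s ψ^s_x = -W(ψ^s_x), ψ^0_x = x. Then for all s ∈ ℝ and x, y ∈ ℝ²: e^{-e^{C|s|}} (1 ∧ |x-y|)^{e^{C|s|}} ≤ 1 ∧ |ψ^s_x - ψ^s_y| ≤ e (1 ∧ |x-y|)^{e^{-C|s|}}. -/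
open Set Filter Real
open scoped Topology RealInnerProductSpace

lemma gronA {φ φ' : ℝ → ℝ} {C a b : ℝ}
    (hd : ∀ t ∈ Icc a b, HasDerivAt φ (φ' t) t)
    (hb : ∀ t ∈ Icc a b, |φ' t| ≤ C * (1 + max 0 (-φ t))) :
    ∀ t ∈ Icc a b, 1 + max 0 (-φ t) ≤ (1 + max 0 (-φ a)) * Real.exp (C * (t - a)) := by
  intro t ht
  have hcφ : ContinuousOn φ (Icc a b) := fun u hu => (hd u hu).continuousAt.continuousWithinAt
  have hcont : ContinuousOn (fun t => 1 + max 0 (-φ t)) (Icc a b) :=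
    (continuous_const.add (continuous_const.max continuous_neg)).comp_continuousOn hcφ
  have key := le_gronwallBound_of_liminf_deriv_right_le (f := fun t => 1 + max 0 (-φ t))
    (f' := fun t => |φ' t|) (δ := 1 + max 0 (-φ a)) (K := C) (ε := 0) hcont ?_ le_rfl ?_
  · have h := key t ht
    rwa [gronwallBound_ε0] at h
  · intro u hu r hr
    have hu' : u ∈ Icc a b := Ico_subset_Icc_self hu
    have hs : Tendsto (fun z => |slope φ u z|) (𝓝[>] u) (𝓝 |φ' u|) := by
      have h1 := hasDerivAt_iff_tendsto_slope.1 (hd u hu')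
      have h2 : Tendsto (slope φ u) (𝓝[>] u) (𝓝 (φ' u)) :=
        h1.mono_left (nhdsWithin_mono _ (fun z hz => ne_of_gt hz))
      exact (continuous_abs.continuousAt.tendsto).comp h2
    have hev : ∀ᶠ z in 𝓝[>] u, |slope φ u z| < r := hs.eventually (eventually_lt_nhds hr)
    refine ((hev.and self_mem_nhdsWithin).mono ?_).frequently
    rintro z ⟨hz1, hz2⟩
    have hzu : (0:ℝ) < z - u := sub_pos.2 hz2
    have hlip : (1 + max 0 (-φ z)) - (1 + max 0 (-φ u)) ≤ |φ z - φ u| := by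
      have : max 0 (-φ z) ≤ max 0 (-φ u) + |φ z - φ u| := by
        apply max_le
        · positivity
        · have : φ u - φ z ≤ |φ z - φ u| := by
            rw [abs_sub_comm]; exact le_abs_self _
          have h3 : -φ u ≤ max 0 (-φ u) := le_max_right _ _
          linarith
      linarith
    calc (z - u)⁻¹ * ((1 + max 0 (-φ z)) - (1 + max 0 (-φ u)))
        ≤ (z - u)⁻¹ * |φ z - φ u| := mul_le_mul_of_nonneg_left hlip (by positivity)
      _ = |slope φ u z| := by
          rw [slope_def_field, abs_div, abs_of_pos hzu, div_eq_inv_mul]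
      _ < r := hz1
  · intro u hu
    have := hb u (Ico_subset_Icc_self hu)
    have h2 : φ' u ≤ |φ' u| := le_abs_self _
    simp only [add_zero]
    linarith

lemma gronB {φ φ' : ℝ → ℝ} {C a b : ℝ} (hab : a ≤ b)
    (hd : ∀ t ∈ Icc a b, HasDerivAt φ (φ' t) t)
    (hb : ∀ t ∈ Icc a b, |φ' t| ≤ C * (1 + max 0 (-φ t))) :
    (1 + max 0 (-φ a)) * Real.exp (-(C * (b - a))) ≤ 1 + max 0 (-φ b) := by
  set ψ : ℝ → ℝ := fun u => φ (a + b - u) with hψ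
  have hmem : ∀ u ∈ Icc a b, a + b - u ∈ Icc a b := by
    intro u hu
    exact ⟨by linarith [hu.2], by linarith [hu.1]⟩
  have hd' : ∀ u ∈ Icc a b, HasDerivAt ψ ((-1 : ℝ) * φ' (a + b - u)) u := by
    intro u hu
    have hinner : HasDerivAt (fun v : ℝ => a + b - v) (-1 : ℝ) u := by
      simpa using (hasDerivAt_id u).const_sub (a + b)
    have := (hd _ (hmem u hu)).comp u hinner
    exact this.congr_deriv (by ring)
  have hb' : ∀ u ∈ Icc a b, |(-1 : ℝ) * φ' (a + b - u)| ≤ C * (1 + max 0 (-ψ u)) := by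
    intro u hu
    have := hb _ (hmem u hu)
    simpa using this
  have h := gronA hd' hb' b ⟨hab, le_rfl⟩
  have hψb : ψ b = φ a := by simp [hψ]
  have hψa : ψ a = φ b := by simp [hψ]
  rw [hψb, hψa] at h
  have hE : (0:ℝ) < Real.exp (C * (b - a)) := Real.exp_pos _
  have hinv : Real.exp (-(C * (b - a))) = (Real.exp (C * (b - a)))⁻¹ := Real.exp_neg _
  rw [hinv]
  rw [mul_inv_le_iff₀ hE]
  linarith [h]

lemma min_one_eq_exp {r : ℝ} (hr : 0 < r) :
    min 1 r = Real.exp (-(max 0 (-Real.log r))) := by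
  rcases le_total 1 r with h | h
  · rw [min_eq_left h, max_eq_left (by simpa using Real.log_nonneg h)]
    simp
  · rw [min_eq_right h, max_eq_right (by simpa using Real.log_nonpos (le_of_lt hr) h)]
    rw [neg_neg, Real.exp_log hr]

lemma aux_fwd (C : ℝ) (hC : 0 < C)
    (W : EuclideanSpace ℝ (Fin 2) → EuclideanSpace ℝ (Fin 2))
    (hW : ∀ x y, ‖W x - W y‖ ≤ C * ‖x - y‖ * (1 + max 0 (-Real.log ‖x - y‖)))
    (ψ : ℝ → EuclideanSpace ℝ (Fin 2) → EuclideanSpace ℝ (Fin 2))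
    (hψ0 : ∀ x, ψ 0 x = x)
    (hflow : ∀ (s : ℝ) (x : EuclideanSpace ℝ (Fin 2)),
      HasDerivAt (fun t => ψ t x) (-W (ψ s x)) s)
    (s : ℝ) (hs : 0 ≤ s) (x y : EuclideanSpace ℝ (Fin 2)) (hxy : x ≠ y) :
    Real.exp (-Real.exp (C * s)) * (min 1 ‖x - y‖) ^ (Real.exp (C * s)) ≤
        min 1 ‖ψ s x - ψ s y‖ ∧
      min 1 ‖ψ s x - ψ s y‖ ≤ Real.exp 1 * (min 1 ‖x - y‖) ^ (Real.exp (-(C * s))) := by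
  set δ : ℝ → EuclideanSpace ℝ (Fin 2) := fun t => ψ t x - ψ t y with hδdef
  set D : ℝ → EuclideanSpace ℝ (Fin 2) := fun t => W (ψ t y) - W (ψ t x) with hDdef
  have hδ : ∀ t, HasDerivAt δ (D t) t := by
    intro t
    have h := (hflow t x).sub (hflow t y)
    refine h.congr_deriv ?_
    simp only [hDdef]; abel
  have hDnorm : ∀ t, ‖D t‖ ≤ C * ‖δ t‖ * (1 + max 0 (-Real.log ‖δ t‖)) := by
    intro t
    have h := hW (ψ t x) (ψ t y)
    have : ‖D t‖ = ‖W (ψ t x) - W (ψ t y)‖ := norm_sub_rev _ _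
    rw [this]
    exact h
  set g : ℝ → ℝ := fun t => ‖δ t‖ with hgdef
  have hgcont : Continuous g := by
    apply continuous_norm.comp
    exact continuous_iff_continuousAt.2 fun t => (hδ t).continuousAt
  set φ : ℝ → ℝ := fun t => Real.log (g t) with hφdef
  set φ' : ℝ → ℝ := fun t => (⟪D t, δ t⟫ : ℝ) / (g t) ^ 2 with hφ'def
  have hφd : ∀ t, g t ≠ 0 → HasDerivAt φ (φ' t) t := by
    intro t h0
    have hδ0 : δ t ≠ 0 := fun h => h0 (by simp [hgdef, h])
    have hq : HasDerivAt (fun u => (⟪δ u, δ u⟫ : ℝ)) (⟪δ t, D t⟫ + ⟪D t, δ t⟫) t :=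
      HasDerivAt.inner ℝ (hδ t) (hδ t)
    have hq2 : HasDerivAt (fun u => (⟪δ u, δ u⟫ : ℝ)) (2 * ⟪D t, δ t⟫) t := by
      convert hq using 1
      rw [real_inner_comm (δ t) (D t)]; ring
    have hqpos : (⟪δ t, δ t⟫ : ℝ) ≠ 0 := by
      rw [real_inner_self_eq_norm_sq]
      positivity
    have hlog := (hq2.log hqpos).div_const 2
    have heq : φ = fun u => Real.log (⟪δ u, δ u⟫ : ℝ) / 2 := by
      funext u
      rw [hφdef]
      simp only [real_inner_self_eq_norm_sq, hgdef]
      rw [Real.log_pow]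
      push_cast
      ring
    rw [heq]
    refine hlog.congr_deriv ?_
    rw [hφ'def, real_inner_self_eq_norm_sq, hgdef]
    ring
  have hone : ∀ t, (0:ℝ) < 1 + max 0 (-φ t) := by
    intro t
    have := le_max_left (0:ℝ) (-φ t)
    linarith
  have hφ'b : ∀ t, g t ≠ 0 → |φ' t| ≤ C * (1 + max 0 (-φ t)) := by
    intro t h0
    have hgpos : 0 < g t := lt_of_le_of_ne (norm_nonneg _) (Ne.symm h0)
    have h1 : |(⟪D t, δ t⟫ : ℝ)| ≤ ‖D t‖ * ‖δ t‖ := abs_real_inner_le_norm _ _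
    have h2 := hDnorm t
    rw [hφ'def, abs_div, abs_of_nonneg (by positivity : (0:ℝ) ≤ (g t)^2),
      div_le_iff₀ (by positivity)]
    have h3 : ‖D t‖ ≤ C * g t * (1 + max 0 (-φ t)) := h2
    have h4 : |(⟪D t, δ t⟫ : ℝ)| ≤ (C * g t * (1 + max 0 (-φ t))) * g t :=
      le_trans h1 (mul_le_mul_of_nonneg_right h3 (norm_nonneg _))
    nlinarith [hone t, hgpos]
  have hg0 : g 0 = ‖x - y‖ := by simp [hgdef, hδdef, hψ0]
  have hg0pos : 0 < g 0 := by
    rw [hg0]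
    exact norm_pos_iff.2 (sub_ne_zero.2 hxy)
  -- positivity of g on [0, s]
  have hpos : ∀ t ∈ Icc 0 s, 0 < g t := by
    by_contra hcon
    push_neg at hcon
    obtain ⟨t₁, ht₁, ht₁0⟩ := hcon
    set Z : Set ℝ := {t | t ∈ Icc 0 s ∧ g t = 0} with hZdef
    have hZne : Z.Nonempty := ⟨t₁, ht₁, le_antisymm ht₁0 (norm_nonneg _)⟩
    have hZbdd : BddBelow Z := ⟨0, fun z hz => hz.1.1⟩
    have hZc : IsClosed Z := by
      have : Z = Icc 0 s ∩ g ⁻¹' {0} := by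
        ext z; simp [hZdef, and_comm]
      rw [this]
      exact isClosed_Icc.inter (isClosed_singleton.preimage hgcont)
    set t₀ := sInf Z with ht₀def
    have ht₀Z : t₀ ∈ Z := hZc.csInf_mem hZne hZbdd
    have ht₀pos : 0 < t₀ := by
      rcases lt_or_eq_of_le ht₀Z.1.1 with h | h
      · exact h
      · exact absurd ht₀Z.2 (by rw [← h]; exact ne_of_gt hg0pos)
    have hlt : ∀ u ∈ Ico 0 t₀, 0 < g u := by
      intro u hu
      by_contra hgu
      push_neg at hgu
      have : u ∈ Z := ⟨⟨hu.1, le_trans hu.2.le ht₀Z.1.2⟩, le_antisymm hgu (norm_nonneg _)⟩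
      exact absurd (csInf_le hZbdd this) (not_le.2 hu.2)
    set M := (1 + max 0 (-φ 0)) * Real.exp (C * s) with hMdef
    have hMb : ∀ b ∈ Ico 0 t₀, Real.exp (1 - M) ≤ g b := by
      intro b hb
      have hbs : b ≤ s := le_trans hb.2.le ht₀Z.1.2
      have hA := gronA (φ := φ) (φ' := φ') (C := C) (a := 0) (b := b)
        (fun u hu => hφd u (ne_of_gt (hlt u ⟨hu.1, lt_of_le_of_lt hu.2 hb.2⟩)))
        (fun u hu => hφ'b u (ne_of_gt (hlt u ⟨hu.1, lt_of_le_of_lt hu.2 hb.2⟩)))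
        b ⟨hb.1, le_rfl⟩
      have hEle : Real.exp (C * (b - 0)) ≤ Real.exp (C * s) :=
        Real.exp_le_exp.2 (by nlinarith)
      have h5 : 1 + max 0 (-φ b) ≤ M := by
        calc 1 + max 0 (-φ b) ≤ (1 + max 0 (-φ 0)) * Real.exp (C * (b - 0)) := hA
          _ ≤ M := mul_le_mul_of_nonneg_left hEle (hone 0).le
      have h6 : -φ b ≤ M - 1 := le_trans (le_max_right 0 _) (by linarith)
      have h7 : 1 - M ≤ φ b := by linarith
      calc Real.exp (1 - M) ≤ Real.exp (φ b) := Real.exp_le_exp.2 h7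
        _ = g b := by rw [hφdef]; exact Real.exp_log (hlt b hb)
    have htend : Tendsto g (𝓝[<] t₀) (𝓝 (g t₀)) :=
      (hgcont.continuousAt.tendsto).mono_left nhdsWithin_le_nhds
    have hev : ∀ᶠ u in 𝓝[<] t₀, Real.exp (1 - M) ≤ g u := by
      filter_upwards [Ioo_mem_nhdsLT_of_mem (⟨ht₀pos, le_rfl⟩ : t₀ ∈ Ioc 0 t₀)] with u hu
      exact hMb u ⟨hu.1.le, hu.2⟩
    have := ge_of_tendsto htend hev
    rw [ht₀Z.2] at this
    exact absurd this (not_le.2 (Real.exp_pos _))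
  -- main Gronwall bounds on [0, s]
  have hd' : ∀ t ∈ Icc 0 s, HasDerivAt φ (φ' t) t := fun t ht => hφd t (ne_of_gt (hpos t ht))
  have hb' : ∀ t ∈ Icc 0 s, |φ' t| ≤ C * (1 + max 0 (-φ t)) :=
    fun t ht => hφ'b t (ne_of_gt (hpos t ht))
  have hup := gronA hd' hb' s ⟨hs, le_rfl⟩
  have hlow := gronB hs hd' hb'
  rw [sub_zero] at hup hlow
  have hgs : 0 < g s := hpos s ⟨hs, le_rfl⟩
  have hmin0 : min 1 ‖x - y‖ = Real.exp (-(max 0 (-φ 0))) := by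
    rw [← hg0]; exact min_one_eq_exp hg0pos
  have hmins : min 1 ‖ψ s x - ψ s y‖ = Real.exp (-(max 0 (-φ s))) :=
    min_one_eq_exp hgs
  set a0 := max 0 (-φ 0) with ha0
  set as := max 0 (-φ s) with has
  set E := Real.exp (C * s) with hE
  have hE1 : 1 ≤ E := Real.one_le_exp (by positivity)
  rw [hmin0, hmins]
  have hF : Real.exp (-(C * s)) > 0 := Real.exp_pos _
  set F := Real.exp (-(C * s)) with hFdef
  constructor
  · rw [← Real.exp_mul, ← Real.exp_add, Real.exp_le_exp]
    have h1 : 1 + as ≤ (1 + a0) * E := hup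
    nlinarith
  · rw [← Real.exp_mul, ← Real.exp_add, Real.exp_le_exp]
    have h2 : (1 + a0) * F ≤ 1 + as := hlow
    have ha0 : 0 ≤ a0 := le_max_left _ _
    nlinarith


theorem stmt_15 (C : ℝ) (hC : 0 < C)
    (W : EuclideanSpace ℝ (Fin 2) → EuclideanSpace ℝ (Fin 2))
    (hW : ∀ x y, ‖W x - W y‖ ≤ C * ‖x - y‖ * (1 + max 0 (-Real.log ‖x - y‖)))
    (ψ : ℝ → EuclideanSpace ℝ (Fin 2) → EuclideanSpace ℝ (Fin 2))
    (hψ0 : ∀ x, ψ 0 x = x)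
    (hflow : ∀ (s : ℝ) (x : EuclideanSpace ℝ (Fin 2)),
      HasDerivAt (fun t => ψ t x) (-W (ψ s x)) s) :
    ∀ (s : ℝ) (x y : EuclideanSpace ℝ (Fin 2)),
      Real.exp (-Real.exp (C * |s|)) * (min 1 ‖x - y‖) ^ (Real.exp (C * |s|)) ≤
        min 1 ‖ψ s x - ψ s y‖ ∧
      min 1 ‖ψ s x - ψ s y‖ ≤ Real.exp 1 * (min 1 ‖x - y‖) ^ (Real.exp (-(C * |s|))) := by
  intro s x y
  by_cases hxy : x = y
  · subst hxy
    have h1 : ψ s x - ψ s x = 0 := sub_self _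
    have h2 : x - x = (0 : EuclideanSpace ℝ (Fin 2)) := sub_self _
    rw [h1, h2, norm_zero, min_eq_right zero_le_one,
      Real.zero_rpow (Real.exp_pos _).ne', Real.zero_rpow (Real.exp_pos _).ne']
    constructor
    · simp
    · positivity
  · rcases le_or_gt 0 s with hs | hs
    · rw [abs_of_nonneg hs]
      exact aux_fwd C hC W hW ψ hψ0 hflow s hs x y hxy
    · rw [abs_of_neg hs]
      have hW' : ∀ a b, ‖(fun z => -W z) a - (fun z => -W z) b‖ ≤
          C * ‖a - b‖ * (1 + max 0 (-Real.log ‖a - b‖)) := by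
        intro a b
        show ‖-W a - -W b‖ ≤ _
        rw [neg_sub_neg, norm_sub_rev]
        exact hW a b
      have hflow' : ∀ (u : ℝ) (z : EuclideanSpace ℝ (Fin 2)),
          HasDerivAt (fun t => (fun t x => ψ (-t) x) t z)
            (-(fun w => -W w) ((fun t x => ψ (-t) x) u z)) u := by
        intro u z
        have h1 : HasDerivAt (fun t : ℝ => ψ (-t) z) ((-1 : ℝ) • (-W (ψ (-u) z))) u :=
          HasDerivAt.scomp u (hflow (-u) z) (hasDerivAt_neg u)
        simpa using h1
      have := aux_fwd C hC (fun z => -W z) hW' (fun t x => ψ (-t) x)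
        (by simpa using hψ0) hflow' (-s) (by linarith) x y hxy
      simpa using this
end
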